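/- Let N ≥ 3 be an integer, let (p,q) be a pair of primes compatible with N, and let n be an integer with 3 ≤ n ≤ N. Then min{f_x(t) : x ∈ S_n} equals f_{x_n(3)}(t) if t ≥ t_3; equals f_{x_n(i)}(t) if t_i ≤ t ≤ t_{i−1} for some 4 ≤ i ≤ n; and equals f_{x_n(n+1)}(t) if 0 < t ≤ t_n. -/

import Mathlib

open Real Filter Topology

/-- The golden ratio `(1 + √5)/2`. -/
noncomputable def phiR : ℝ := (1 + Real.sqrt 5) / 2

/-- `mmax p q n = max(h_n·log p, h_{n-1}·log q)`, the logarithmic Mahler measure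
of `p^{h_n}/q^{h_{n-1}}` for distinct primes `p`, `q`, where `h` is Fibonacci. -/
noncomputable def mmax (p q n : ℕ) : ℝ :=
  max ((Nat.fib n : ℝ) * Real.log p) ((Nat.fib (n - 1) : ℝ) * Real.log q)

/-- `gmax n = max(h_n, φ·h_{n-1})`. -/
noncomputable def gmax (n : ℕ) : ℝ :=
  max (Nat.fib n : ℝ) (phiR * (Nat.fib (n - 1) : ℝ))

/-- The equation defining `t_n(p,q)`:
`m(p^{h_n}/q^{h_{n-1}})^t = m(p^{h_{n-1}}/q^{h_{n-2}})^t + m(p^{h_{n-2}}/q^{h_{n-3}})^t`. -/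
def peq (p q n : ℕ) (t : ℝ) : Prop :=
  mmax p q n ^ t = mmax p q (n - 1) ^ t + mmax p q (n - 2) ^ t

/-- The equation defining `s_n`:
`max(h_n, φ h_{n-1})^t = max(h_{n-1}, φ h_{n-2})^t + max(h_{n-2}, φ h_{n-3})^t`. -/
def geq (n : ℕ) (t : ℝ) : Prop :=
  gmax n ^ t = gmax (n - 1) ^ t + gmax (n - 2) ^ t

/-- Condition (W) on a pair of primes `(p,q)` relative to `N`. -/
def CondW (N p q : ℕ) : Prop :=
  ((Nat.fib N : ℝ) / Nat.fib (N - 1) < Real.log q / Real.log p ∧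
    Real.log q / Real.log p < (Nat.fib (N - 1) : ℝ) / Nat.fib (N - 2)) ∨
  ((Nat.fib (N - 1) : ℝ) / Nat.fib (N - 2) < Real.log q / Real.log p ∧
    Real.log q / Real.log p < (Nat.fib N : ℝ) / Nat.fib (N - 1))

/-- `V_n`: vectors `x ∈ ℕ^N` (1-based entry `i` is `x ⟨i-1⟩`) with
`Σ x_i h_i = h_n` and `Σ x_i h_{i-1} = h_{n-1}`. -/
def Vset (N n : ℕ) : Set (Fin N → ℕ) :=
  {x | ∑ i, x i * Nat.fib ((i : ℕ) + 1) = Nat.fib n ∧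
       ∑ i, x i * Nat.fib (i : ℕ) = Nat.fib (n - 1)}

/-- The measure function `f_x(t) = (Σ_{i=1}^N x_i·max(h_i log p, h_{i-1} log q)^t)^{1/t}`. -/
noncomputable def fmeas (N p q : ℕ) (x : Fin N → ℕ) (t : ℝ) : ℝ :=
  (∑ i, (x i : ℝ) * mmax p q ((i : ℕ) + 1) ^ t) ^ (1 / t)

/-- `x_n(i)`: the vector whose (i−2)nd (1-based) entry is `h_{n+1−i}`, whose
(i−1)st entry is `h_{n+2−i}`, and whose other entries are 0.  (For `i = 2`, `n = 1`
this gives `x_1(2) = (1,0,…,0)`.) -/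
def xvec (N n i : ℕ) : Fin N → ℕ := fun j =>
  if (j : ℕ) + 3 = i then Nat.fib (n + 1 - i)
  else if (j : ℕ) + 2 = i then Nat.fib (n + 2 - i)
  else 0

/-- `S_n = {x_n(i) : 3 ≤ i ≤ n+1}` for `n ≥ 2`, and `S_1 = {x_1(2)}`. -/
def Sset (N n : ℕ) : Set (Fin N → ℕ) :=
  if n = 1 then {xvec N 1 2}
  else {x | ∃ i, 3 ≤ i ∧ i ≤ n + 1 ∧ x = xvec N n i}

/-- `z` is almost consecutive-free: `z_j·z_{j+1} ≠ 0` implies `z_i = 0` for all `i > j+1`. -/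
def ACF (N : ℕ) (z : Fin N → ℕ) : Prop :=
  ∀ (j : Fin N) (hj : (j : ℕ) + 1 < N),
    z j * z ⟨(j : ℕ) + 1, hj⟩ ≠ 0 → ∀ i : Fin N, (j : ℕ) + 1 < (i : ℕ) → z i = 0

/-- `C_n`: the almost consecutive-free elements of `V_n`. -/
def Cset (N n : ℕ) : Set (Fin N → ℕ) := {z ∈ Vset N n | ACF N z}

/-- A factorization of `z ∈ V_n`: a `K`-tuple `x` with `x k ∈ V_{idx k}`,
`1 ≤ idx k ≤ n`, and `z = Σ_k x k`. -/
def IsFactorization (N n : ℕ) (z : Fin N → ℕ) {K : ℕ}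
    (idx : Fin K → ℕ) (x : Fin K → Fin N → ℕ) : Prop :=
  (∀ k, 1 ≤ idx k ∧ idx k ≤ n ∧ x k ∈ Vset N (idx k)) ∧ z = ∑ k, x k

/-- A tuple is `S`-type if each component lies in `∪_{i=1}^n S_i`. -/
def STypeFac (N n : ℕ) {K : ℕ} (x : Fin K → Fin N → ℕ) : Prop :=
  ∀ k, ∃ i, 1 ≤ i ∧ i ≤ n ∧ x k ∈ Sset N i

/-- `z` is `S`-restricted: every non-trivial (i.e. `K ≠ 1`) factorization is `S`-type. -/
def SRestricted (N n : ℕ) (z : Fin N → ℕ) : Prop :=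
  ∀ (K : ℕ) (idx : Fin K → ℕ) (x : Fin K → Fin N → ℕ),
    IsFactorization N n z idx x → K ≠ 1 → STypeFac N n x

/-- `R_n`: the `S`-restricted elements of `C_n`. -/
def Rset (N n : ℕ) : Set (Fin N → ℕ) := {z ∈ Cset N n | SRestricted N n z}

/-- The infimum attaining set `U_x = {t > 0 : f_x(t) = min{f_y(t) : y ∈ V_j}}`. -/
def Uset (N p q j : ℕ) (x : Fin N → ℕ) : Set ℝ :=
  {t | 0 < t ∧ IsLeast ((fun y => fmeas N p q y t) '' Vset N j) (fmeas N p q x t)}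

/-- The shift map `λ((x_1,…,x_N)) = (0,x_1,…,x_{N-1})`. -/
def shiftMap (N : ℕ) (x : Fin N → ℕ) : Fin N → ℕ := fun j =>
  if (j : ℕ) = 0 then 0
  else x ⟨(j : ℕ) - 1, lt_of_le_of_lt (Nat.sub_le _ _) j.isLt⟩



lemma crossing_sign (a b c t0 : ℝ) (ha : 0 < a) (hb : 0 < b) (hac : a < c) (hbc : b < c)
    (ht0 : 0 < t0) (heq : a ^ t0 + b ^ t0 = c ^ t0)
    (huniq : ∀ s : ℝ, 0 < s → a ^ s + b ^ s = c ^ s → s = t0) :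
    (∀ s : ℝ, 0 < s → s ≤ t0 → c ^ s ≤ a ^ s + b ^ s) ∧
    (∀ s : ℝ, t0 ≤ s → a ^ s + b ^ s ≤ c ^ s) := by
  have hc : 0 < c := ha.trans hac
  have hcont : Continuous fun s : ℝ => a ^ s + b ^ s - c ^ s := by
    have h1 : ∀ x : ℝ, 0 < x → Continuous fun s : ℝ => x ^ s := by
      intro x hx
      simp only [Real.rpow_def_of_pos hx]
      exact Real.continuous_exp.comp (continuous_const.mul continuous_id)
    exact ((h1 a ha).add (h1 b hb)).sub (h1 c hc)
  constructor
  · intro s hs hst0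
    rcases eq_or_lt_of_le hst0 with rfl | hlt
    · exact heq.ge
    by_contra hcon
    push_neg at hcon
    have hmem : (0 : ℝ) ∈ Set.Icc ((fun s : ℝ => a ^ s + b ^ s - c ^ s) s)
        ((fun s : ℝ => a ^ s + b ^ s - c ^ s) 0) := by
      constructor
      · simp only; linarith
      · simp
    obtain ⟨x, hx, hgx⟩ := intermediate_value_Icc' hs.le hcont.continuousOn hmem
    simp only at hgx
    have hxpos : 0 < x := by
      rcases eq_or_lt_of_le hx.1 with rfl | h
      · exfalso; simp at hgx
      · exact h
    have hxeq : x = t0 := huniq x hxpos (by linarith)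
    linarith [hx.2]
  · intro s hst0
    rcases eq_or_lt_of_le hst0 with rfl | hlt
    · exact heq.le
    by_contra hcon
    push_neg at hcon
    -- find T > s with a^T + b^T < c^T
    have hten : Tendsto (fun T : ℝ => (a / c) ^ T + (b / c) ^ T) atTop (𝓝 0) := by
      have h1 := tendsto_rpow_atTop_of_base_lt_one (a / c)
        ((neg_lt_zero.mpr one_pos).trans (by positivity)) ((div_lt_one hc).mpr hac)
      have h2 := tendsto_rpow_atTop_of_base_lt_one (b / c)
        ((neg_lt_zero.mpr one_pos).trans (by positivity)) ((div_lt_one hc).mpr hbc)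
      simpa using h1.add h2
    have hev : ∀ᶠ T : ℝ in atTop, (a / c) ^ T + (b / c) ^ T < 1 :=
      hten.eventually_lt_const one_pos
    obtain ⟨T, hT⟩ := (hev.and (eventually_gt_atTop s)).exists
    have hTlt : a ^ T + b ^ T < c ^ T := by
      have h3 : a ^ T / c ^ T + b ^ T / c ^ T < 1 := by
        rw [← Real.div_rpow ha.le hc.le, ← Real.div_rpow hb.le hc.le]; exact hT.1
      have hcT : (0:ℝ) < c ^ T := Real.rpow_pos_of_pos hc T
      rw [← add_div, div_lt_one hcT] at h3; exact h3
    have hmem : (0 : ℝ) ∈ Set.Icc ((fun s : ℝ => a ^ s + b ^ s - c ^ s) T)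
        ((fun s : ℝ => a ^ s + b ^ s - c ^ s) s) := by
      constructor
      · simp only; linarith
      · simp only; linarith
    obtain ⟨x, hx, hgx⟩ := intermediate_value_Icc' hT.2.le hcont.continuousOn hmem
    simp only at hgx
    have hxpos : 0 < x := lt_of_lt_of_le (ht0.trans hlt) hx.1
    have hxeq : x = t0 := huniq x hxpos (by linarith)
    linarith [hx.1]


lemma chain_le (f : ℕ → ℝ) (a : ℕ) :
    ∀ b, a ≤ b → (∀ j, a ≤ j → j < b → f j ≤ f (j + 1)) → f a ≤ f b := by
  intro b
  induction b with
  | zero =>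
    intro hab _
    have : a = 0 := by omega
    simp [this]
  | succ m ih =>
    intro hab h
    rcases Nat.lt_or_ge a (m+1) with hlt | hge
    · have ham : a ≤ m := by omega
      exact le_trans (ih ham (fun j hj hj' => h j hj (by omega))) (h m ham (by omega))
    · have : a = m + 1 := by omega
      simp [this]

lemma chain_ge (f : ℕ → ℝ) (a : ℕ) :
    ∀ b, a ≤ b → (∀ j, a ≤ j → j < b → f (j + 1) ≤ f j) → f b ≤ f a := by
  intro b
  induction b with
  | zero => intro hab _; have : a = 0 := by omega
            simp [this]
  | succ m ih =>
    intro hab h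
    rcases Nat.lt_or_ge a (m+1) with hlt | hge
    · have ham : a ≤ m := by omega
      exact le_trans (h m ham (by omega)) (ih ham (fun j hj hj' => h j hj (by omega)))
    · have : a = m + 1 := by omega
      simp [this]

lemma condW_logs (N p q : ℕ) (hN : 3 ≤ N) (hp : p.Prime) (hq : q.Prime) (hW : CondW N p q) :
    Real.log p < Real.log q ∧ Real.log q < 2 * Real.log p := by
  have hlp : 0 < Real.log p := Real.log_pos (by exact_mod_cast hp.one_lt)
  obtain ⟨K, rfl⟩ : ∃ K, N = K + 3 := ⟨N - 3, by omega⟩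
  have e1 : K + 3 - 1 = K + 2 := by omega
  have e2 : K + 3 - 2 = K + 1 := by omega
  rw [CondW, e1, e2] at hW
  have hf1 : (0:ℝ) < Nat.fib (K+1) := by
    exact_mod_cast Nat.fib_pos.mpr (by omega)
  have hf2 : (0:ℝ) < Nat.fib (K+2) := by
    exact_mod_cast Nat.fib_pos.mpr (by omega)
  have hm12 : (Nat.fib (K+1) : ℝ) ≤ Nat.fib (K+2) := by
    exact_mod_cast Nat.fib_mono (by omega)
  have hm23 : (Nat.fib (K+2) : ℝ) ≤ Nat.fib (K+3) := by
    exact_mod_cast Nat.fib_mono (by omega)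
  have hd2 : (Nat.fib (K+2) : ℝ) ≤ 2 * Nat.fib (K+1) := by
    have : Nat.fib (K+2) = Nat.fib K + Nat.fib (K+1) := Nat.fib_add_two
    have hk : (Nat.fib K : ℝ) ≤ Nat.fib (K+1) := by exact_mod_cast Nat.fib_mono (by omega)
    push_cast [this]; linarith
  have hd3 : (Nat.fib (K+3) : ℝ) ≤ 2 * Nat.fib (K+2) := by
    have : Nat.fib (K+3) = Nat.fib (K+1) + Nat.fib (K+2) := Nat.fib_add_two
    push_cast [this]; linarith
  have key : 1 < Real.log q / Real.log p ∧ Real.log q / Real.log p < 2 := by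
    rcases hW with ⟨h1, h2⟩ | ⟨h1, h2⟩
    · constructor
      · exact lt_of_le_of_lt ((one_le_div hf2).mpr hm23) h1
      · exact lt_of_lt_of_le h2 ((div_le_iff₀ hf1).mpr (by linarith))
    · constructor
      · exact lt_of_le_of_lt ((one_le_div hf1).mpr hm12) h1
      · exact lt_of_lt_of_le h2 ((div_le_iff₀ hf2).mpr (by linarith))
  exact ⟨(one_lt_div hlp).mp key.1, (div_lt_iff₀ hlp).mp key.2⟩

lemma mmax_pos (p q m : ℕ) (hlp : 0 < Real.log p) (hm : 1 ≤ m) : 0 < mmax p q m := by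
  have : (0:ℝ) < (Nat.fib m : ℝ) * Real.log p := by
    have : (0:ℝ) < Nat.fib m := by exact_mod_cast Nat.fib_pos.mpr (by omega)
    positivity
  exact lt_of_lt_of_le this (le_max_left _ _)

lemma mmax_nonneg (p q m : ℕ) (hlp : 0 < Real.log p) : 0 ≤ mmax p q m :=
  le_trans (mul_nonneg (Nat.cast_nonneg _) hlp.le) (le_max_left _ _)

lemma mmax_lt_succ (p q m : ℕ) (hlp : 0 < Real.log p)
    (h1 : Real.log p < Real.log q) (h2 : Real.log q < 2 * Real.log p) (hm : 1 ≤ m) :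
    mmax p q m < mmax p q (m + 1) := by
  have hlq : 0 < Real.log q := hlp.trans h1
  rcases Nat.lt_or_ge m 3 with hm3 | hm3
  · interval_cases m
    · -- m = 1
      have f0 : Nat.fib 0 = 0 := rfl
      have f1 : Nat.fib 1 = 1 := rfl
      have f2 : Nat.fib 2 = 1 := rfl
      simp only [mmax, show (1:ℕ) - 1 = 0 from rfl, show (1:ℕ) + 1 = 2 from rfl,
        show (2:ℕ) - 1 = 1 from rfl, f0, f1, f2]
      push_cast
      rw [zero_mul, one_mul, one_mul]
      apply max_lt
      · exact lt_max_of_lt_right h1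
      · exact lt_max_of_lt_left hlp
    · -- m = 2
      have f1 : Nat.fib 1 = 1 := rfl
      have f2 : Nat.fib 2 = 1 := rfl
      have f3 : Nat.fib 3 = 2 := rfl
      simp only [mmax, show (2:ℕ) - 1 = 1 from rfl, show (2:ℕ) + 1 = 3 from rfl,
        show (3:ℕ) - 1 = 2 from rfl, f1, f2, f3]
      push_cast
      apply max_lt
      · exact lt_max_of_lt_left (by linarith)
      · exact lt_max_of_lt_left (by linarith)
  · obtain ⟨e, rfl⟩ : ∃ e, m = e + 3 := ⟨m - 3, by omega⟩
    simp only [mmax, show e + 3 - 1 = e + 2 by omega, show e + 3 + 1 - 1 = e + 3 by omega]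
    apply max_lt
    · apply lt_max_of_lt_left
      have : (Nat.fib (e+3) : ℝ) < Nat.fib (e+3+1) := by
        exact_mod_cast Nat.fib_lt_fib_succ (by omega)
      nlinarith
    · apply lt_max_of_lt_right
      have : (Nat.fib (e+2) : ℝ) < Nat.fib (e+3) := by
        exact_mod_cast Nat.fib_lt_fib_succ (by omega)
      nlinarith

/-- Auxiliary: the inner value `F_i(t) = h_{n+1-i}·M_{i-2}^t + h_{n+2-i}·M_{i-1}^t`. -/
noncomputable def Gfun (p q n : ℕ) (t : ℝ) (i : ℕ) : ℝ :=
  (Nat.fib (n + 1 - i) : ℝ) * mmax p q (i - 2) ^ t +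
    (Nat.fib (n + 2 - i) : ℝ) * mmax p q (i - 1) ^ t

lemma Gfun_nonneg (p q n : ℕ) (t : ℝ) (i : ℕ) (hlp : 0 < Real.log p) :
    0 ≤ Gfun p q n t i := by
  have h1 := mmax_nonneg p q (i - 2) hlp
  have h2 := mmax_nonneg p q (i - 1) hlp
  have := Real.rpow_nonneg h1 t
  have := Real.rpow_nonneg h2 t
  unfold Gfun
  positivity

lemma Gfun_step (p q n : ℕ) (t : ℝ) (j : ℕ) (h3 : 3 ≤ j) (hjn : j ≤ n) :
    Gfun p q n t j - Gfun p q n t (j + 1) =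
      (Nat.fib (n + 1 - j) : ℝ) *
        (mmax p q (j - 2) ^ t + mmax p q (j - 1) ^ t - mmax p q j ^ t) := by
  obtain ⟨e, rfl⟩ : ∃ e, j = e + 3 := ⟨j - 3, by omega⟩
  obtain ⟨d, rfl⟩ : ∃ d, n = e + 3 + d := ⟨n - (e + 3), by omega⟩
  simp only [Gfun, show e+3+d+1-(e+3) = d+1 by omega, show e+3+d+2-(e+3) = d+2 by omega,
    show e+3+d+1-(e+3+1) = d by omega, show e+3+d+2-(e+3+1) = d+1 by omega,
    show e+3-2 = e+1 by omega, show e+3-1 = e+2 by omega,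
    show e+3+1-2 = e+2 by omega, show e+3+1-1 = e+3 by omega]
  have hfib : Nat.fib (d+2) = Nat.fib d + Nat.fib (d+1) := Nat.fib_add_two
  push_cast [hfib]
  ring

lemma fmeas_xvec (N p q n i : ℕ) (t : ℝ) (h3 : 3 ≤ i) (hi : i ≤ n + 1) (hnN : n ≤ N)
    (hN : 3 ≤ N) :
    fmeas N p q (xvec N n i) t = Gfun p q n t i ^ (1 / t) := by
  have hiN : i - 2 < N := by omega
  set a : Fin N := ⟨i - 3, by omega⟩ with ha
  set b : Fin N := ⟨i - 2, hiN⟩ with hb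
  have hav : (a : ℕ) = i - 3 := rfl
  have hbv : (b : ℕ) = i - 2 := rfl
  have hab : a ≠ b := by
    intro h
    have := congrArg Fin.val h
    rw [hav, hbv] at this
    omega
  have hsum : ∑ j : Fin N, (xvec N n i j : ℝ) * mmax p q ((j : ℕ) + 1) ^ t =
      ∑ j ∈ ({a, b} : Finset (Fin N)), (xvec N n i j : ℝ) * mmax p q ((j : ℕ) + 1) ^ t := by
    symm
    apply Finset.sum_subset (Finset.subset_univ _)
    intro x _ hx
    simp only [Finset.mem_insert, Finset.mem_singleton] at hx
    push_neg at hx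
    have hx1 : (x : ℕ) ≠ i - 3 := fun h => hx.1 (Fin.ext (by rw [h, hav]))
    have hx2 : (x : ℕ) ≠ i - 2 := fun h => hx.2 (Fin.ext (by rw [h, hbv]))
    have : xvec N n i x = 0 := by
      simp only [xvec]
      rw [if_neg (by omega), if_neg (by omega)]
    simp [this]
  rw [fmeas, hsum, Finset.sum_pair hab]
  have ea : xvec N n i a = Nat.fib (n + 1 - i) := by
    simp only [xvec, hav]
    rw [if_pos (by omega)]
  have eb : xvec N n i b = Nat.fib (n + 2 - i) := by
    simp only [xvec, hbv]
    rw [if_neg (by omega), if_pos (by omega)]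
  have ma : ((a : ℕ) + 1) = i - 2 := by rw [hav]; omega
  have mb : ((b : ℕ) + 1) = i - 1 := by rw [hbv]; omega
  rw [ea, eb, ma, mb, Gfun]

/-- Theorem `MinimumOver`: for `N ≥ 3`, a pair of primes `(p,q)` compatible
with `N`, and `3 ≤ n ≤ N`, the minimum `min{f_x(t) : x ∈ S_n}` equals `f_{x_n(3)}(t)` when
`t ≥ t_3`, equals `f_{x_n(i)}(t)` when `t_i ≤ t ≤ t_{i-1}` for some `4 ≤ i ≤ n`, and equals
`f_{x_n(n+1)}(t)` when `0 < t ≤ t_n`. -/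
theorem stmt6 (N p q : ℕ) (hN : 3 ≤ N) (hp : p.Prime) (hq : q.Prime) (hW : CondW N p q)
    (tt : ℕ → ℝ)
    (htt : ∀ m : ℕ, 3 ≤ m → m ≤ N + 1 →
      (0 < tt m ∧ peq p q m (tt m)) ∧ ∀ t' : ℝ, 0 < t' → peq p q m t' → t' = tt m)
    (hdec : ∀ m : ℕ, 3 ≤ m → m ≤ N → tt (m + 1) < tt m)
    (n : ℕ) (h3n : 3 ≤ n) (hnN : n ≤ N) (t : ℝ) (ht : 0 < t) :
    (tt 3 ≤ t →
      IsLeast ((fun x => fmeas N p q x t) '' Sset N n) (fmeas N p q (xvec N n 3) t)) ∧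
    (∀ i : ℕ, 4 ≤ i → i ≤ n → tt i ≤ t → t ≤ tt (i - 1) →
      IsLeast ((fun x => fmeas N p q x t) '' Sset N n) (fmeas N p q (xvec N n i) t)) ∧
    (t ≤ tt n →
      IsLeast ((fun x => fmeas N p q x t) '' Sset N n)
        (fmeas N p q (xvec N n (n + 1)) t)) := by
  obtain ⟨hlpq, hlq2p⟩ := condW_logs N p q hN hp hq hW
  have hlp : 0 < Real.log p := Real.log_pos (by exact_mod_cast hp.one_lt)
  have hSn : Sset N n = {x | ∃ i, 3 ≤ i ∧ i ≤ n + 1 ∧ x = xvec N n i} := by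
    rw [Sset, if_neg (by omega)]
  -- sign facts for each j
  have hsign : ∀ j, 3 ≤ j → j ≤ n →
      (∀ s : ℝ, 0 < s → s ≤ tt j →
        mmax p q j ^ s ≤ mmax p q (j-2) ^ s + mmax p q (j-1) ^ s) ∧
      (∀ s : ℝ, tt j ≤ s →
        mmax p q (j-2) ^ s + mmax p q (j-1) ^ s ≤ mmax p q j ^ s) := by
    intro j hj3 hjn
    obtain ⟨e, rfl⟩ : ∃ e, j = e + 3 := ⟨j - 3, by omega⟩
    have hjn1 : e + 3 ≤ N + 1 := by omega
    obtain ⟨⟨htpos, hteq⟩, htuniq⟩ := htt (e+3) (by omega) hjn1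
    have hlt1 : mmax p q (e+1) < mmax p q (e+2) := mmax_lt_succ p q (e+1) hlp hlpq hlq2p (by omega)
    have hlt2 : mmax p q (e+2) < mmax p q (e+3) := mmax_lt_succ p q (e+2) hlp hlpq hlq2p (by omega)
    have e1 : e + 3 - 2 = e + 1 := by omega
    have e2 : e + 3 - 1 = e + 2 := by omega
    rw [peq, e1, e2] at hteq
    have := crossing_sign (mmax p q (e+1)) (mmax p q (e+2)) (mmax p q (e+3)) (tt (e+3))
      (mmax_pos p q (e+1) hlp (by omega)) (mmax_pos p q (e+2) hlp (by omega))
      (hlt1.trans hlt2) hlt2 htpos (by linarith)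
      (fun s hs hseq => htuniq s hs (by rw [peq, e1, e2]; linarith))
    rw [e1, e2]
    exact ⟨fun s hs hst => by linarith [this.1 s hs hst], fun s hst => this.2 s hst⟩
  -- antitonicity of tt
  have hanti : ∀ a b : ℕ, 3 ≤ a → a ≤ b → b ≤ N + 1 → tt b ≤ tt a := by
    intro a b ha hab
    induction b, hab using Nat.le_induction with
    | base => intro _; exact le_refl _
    | succ m ham ih =>
      intro hm
      exact le_trans (hdec m (by omega) (by omega)).le (ih (by omega))
  -- step comparisons for Gfun
  have hup : ∀ j, 3 ≤ j → j ≤ n → tt j ≤ t → Gfun p q n t j ≤ Gfun p q n t (j+1) := by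
    intro j hj3 hjn hjt
    have hstep := Gfun_step p q n t j hj3 hjn
    have hs := (hsign j hj3 hjn).2 t hjt
    have hfib : (0:ℝ) ≤ Nat.fib (n + 1 - j) := Nat.cast_nonneg _
    nlinarith
  have hdown : ∀ j, 3 ≤ j → j ≤ n → t ≤ tt j → Gfun p q n t (j+1) ≤ Gfun p q n t j := by
    intro j hj3 hjn hjt
    have hstep := Gfun_step p q n t j hj3 hjn
    have hs := (hsign j hj3 hjn).1 t ht hjt
    have hfib : (0:ℝ) ≤ Nat.fib (n + 1 - j) := Nat.cast_nonneg _
    nlinarith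
  -- the main claim for an arbitrary pivot i0
  have claim : ∀ i0 : ℕ, 3 ≤ i0 → i0 ≤ n + 1 →
      (∀ j, 3 ≤ j → j < i0 → t ≤ tt j) → (∀ j, i0 ≤ j → j ≤ n → tt j ≤ t) →
      IsLeast ((fun x => fmeas N p q x t) '' Sset N n) (fmeas N p q (xvec N n i0) t) := by
    intro i0 h3i0 hi0n hbefore hafter
    constructor
    · exact ⟨xvec N n i0, by rw [hSn]; exact ⟨i0, h3i0, hi0n, rfl⟩, rfl⟩
    · rintro y ⟨x, hxS, rfl⟩
      rw [hSn] at hxS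
      obtain ⟨i, h3i, hin, rfl⟩ := hxS
      show fmeas N p q (xvec N n i0) t ≤ fmeas N p q (xvec N n i) t
      rw [fmeas_xvec N p q n i t h3i hin hnN hN, fmeas_xvec N p q n i0 t h3i0 hi0n hnN hN]
      have hG : Gfun p q n t i0 ≤ Gfun p q n t i := by
        rcases le_total i0 i with hle | hle
        · exact chain_le (Gfun p q n t) i0 i hle
            (fun j hj hj' => hup j (by omega) (by omega) (hafter j hj (by omega)))
        · exact chain_ge (Gfun p q n t) i i0 hle
            (fun j hj hj' => hdown j (by omega) (by omega) (hbefore j (by omega) hj'))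
      exact Real.rpow_le_rpow (Gfun_nonneg p q n t i0 hlp) hG (by positivity)
  refine ⟨?_, ?_, ?_⟩
  · intro ht3
    exact claim 3 le_rfl (by omega) (fun j hj hj' => by omega)
      (fun j hj hjn => le_trans (hanti 3 j (by omega) hj (by omega)) ht3)
  · intro i h4i hin hti hti'
    refine claim i (by omega) (by omega) (fun j hj hj' => ?_) (fun j hj hjn => ?_)
    · exact le_trans hti' (hanti j (i-1) hj (by omega) (by omega))
    · exact le_trans (hanti i j (by omega) hj (by omega)) hti
  · intro htn
    exact claim (n+1) (by omega) le_rfl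
      (fun j hj hj' => le_trans htn (hanti j n hj (by omega) (by omega)))
      (fun j hj hjn => by omega)
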